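/- The set A_μ = { g ∈ G : lim_{n→∞} μ^{*n}(g)/μ^{*n}(e) = 1 } is a subgroup of G. -/

import Mathlib

open Filter Topology
open scoped Classical

/-- Convolution of two real-valued functions on a discrete group. -/
noncomputable def conv {G : Type*} [Group G] (μ τ : G → ℝ) : G → ℝ :=
  fun y => ∑' x : G, μ x * τ (x⁻¹ * y)

/-- `n`-fold convolution power, with `μ^{*0}` the Dirac mass at the identity. -/
noncomputable def convPow {G : Type*} [Group G] (μ : G → ℝ) : ℕ → G → ℝ
  | 0 => fun x => if x = 1 then 1 else 0
  | n + 1 => conv (convPow μ n) μ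

/-- `μ` is a probability measure on the discrete group `G`. -/
def IsProb {G : Type*} [Group G] (μ : G → ℝ) : Prop :=
  (∀ x, 0 ≤ μ x) ∧ ∑' x : G, μ x = 1

/-- `μ` is symmetric. -/
def MeasSymm {G : Type*} [Group G] (μ : G → ℝ) : Prop := ∀ x, μ x⁻¹ = μ x

/-- `μ` is aperiodic: `gcd { n ≥ 1 | μ^{*n}(e) > 0 } = 1`. -/
def IsAperiodic {G : Type*} [Group G] (μ : G → ℝ) : Prop :=
  ∀ d : ℕ, (∀ n : ℕ, 1 ≤ n → 0 < convPow μ n 1 → d ∣ n) → d = 1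

/-- The support of `μ` generates `G`. -/
def GeneratingSupport {G : Type*} [Group G] (μ : G → ℝ) : Prop :=
  Subgroup.closure {x : G | 0 < μ x} = ⊤

/-- The set `A_μ = { g | μ^{*n}(g)/μ^{*n}(e) → 1 }`. -/
def Amu {G : Type*} [Group G] (μ : G → ℝ) : Set G :=
  {g | Tendsto (fun n => convPow μ n g / convPow μ n 1) atTop (𝓝 1)}

/-- ℓ² inner product. -/
noncomputable def l2inner {G : Type*} (f h : G → ℝ) : ℝ := ∑' x : G, f x * h x

/-- ℓ² norm. -/
noncomputable def l2norm {G : Type*} (f : G → ℝ) : ℝ :=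
  Real.sqrt (∑' x : G, (f x) ^ 2)

/-- Left translation: `(g · f)(x) = f (g⁻¹ x)`. -/
def ltrans {G : Type*} [Group G] (g : G) (f : G → ℝ) : G → ℝ := fun x => f (g⁻¹ * x)

/-- The normalized convolution powers `ξ_n = μ^{*n}/‖μ^{*n}‖₂`. -/
noncomputable def xi {G : Type*} [Group G] (μ : G → ℝ) (n : ℕ) : G → ℝ :=
  fun x => convPow μ n x / l2norm (convPow μ n)

/-- Reiter-type characterization of amenability: a sequence of almost-invariant
unit vectors in `ℓ²(K)`. -/
def ReiterAmenable (K : Type*) [Group K] : Prop :=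
  ∃ ψ : ℕ → K → ℝ, (∀ n, ∑' x : K, (ψ n x) ^ 2 = 1) ∧
    ∀ k : K, Tendsto
      (fun n => Real.sqrt (∑' x : K, (ψ n (k⁻¹ * x) - ψ n x) ^ 2)) atTop (𝓝 0)

section Basics

variable {G : Type*} [Group G]

private def shearE (G : Type*) [Group G] : G × G ≃ G × G where
  toFun p := (p.1, p.1 * p.2)
  invFun p := (p.1, p.1⁻¹ * p.2)
  left_inv p := by simp
  right_inv p := by simp

lemma summable_shear {f g : G → ℝ} (hf0 : ∀ x, 0 ≤ f x) (hg0 : ∀ x, 0 ≤ g x)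
    (hf : Summable f) (hg : Summable g) :
    Summable (fun p : G × G => f p.1 * g (p.1⁻¹ * p.2)) := by
  have h := hf.mul_of_nonneg hg hf0 hg0
  have h2 : Summable ((fun p : G × G => f p.1 * g (p.1⁻¹ * p.2)) ∘ (shearE G)) := by
    refine h.congr fun p => ?_
    simp [shearE]
  exact (Equiv.summable_iff (shearE G)).mp h2

lemma summable_conv_slice {f g : G → ℝ} (hf0 : ∀ x, 0 ≤ f x) (hg0 : ∀ x, 0 ≤ g x)
    (hf : Summable f) (hg : Summable g) (y : G) :
    Summable fun x => f x * g (x⁻¹ * y) := by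
  have h := ((summable_shear hf0 hg0 hf hg).prod_symm).prod_factor y
  exact h.congr fun x => rfl

lemma conv_nonneg' {f g : G → ℝ} (hf0 : ∀ x, 0 ≤ f x) (hg0 : ∀ x, 0 ≤ g x) (y : G) :
    0 ≤ conv f g y :=
  tsum_nonneg fun x => mul_nonneg (hf0 x) (hg0 _)

lemma conv_summable {f g : G → ℝ} (hf0 : ∀ x, 0 ≤ f x) (hg0 : ∀ x, 0 ≤ g x)
    (hf : Summable f) (hg : Summable g) : Summable (conv f g) := by
  have h := ((summable_shear hf0 hg0 hf hg).prod_symm).prod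
  exact h.congr fun y => rfl

lemma tsum_conv {f g : G → ℝ} (hf0 : ∀ x, 0 ≤ f x) (hg0 : ∀ x, 0 ≤ g x)
    (hf : Summable f) (hg : Summable g) :
    ∑' y, conv f g y = (∑' x, f x) * (∑' x, g x) := by
  have hS := summable_shear hf0 hg0 hf hg
  have h1 : ∑' p : G × G, f p.1 * g (p.1⁻¹ * p.2) = ∑' x, ∑' y, f x * g (x⁻¹ * y) :=
    Summable.tsum_prod hS
  have h2 : ∑' p : G × G, f p.1 * g (p.1⁻¹ * p.2) = ∑' y, conv f g y := by
    have h3 : ∑' p : G × G, f p.2 * g (p.2⁻¹ * p.1) = ∑' (b : G), ∑' (c : G), f c * g (c⁻¹ * b) :=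
      Summable.tsum_prod hS.prod_symm
    have h4 : ∑' p : G × G, f p.2 * g (p.2⁻¹ * p.1) = ∑' p : G × G, f p.1 * g (p.1⁻¹ * p.2) :=
      (Equiv.prodComm G G).tsum_eq (fun p : G × G => f p.1 * g (p.1⁻¹ * p.2))
    rw [← h4, h3]
    rfl
  have h5 : ∀ x : G, (∑' (y : G), f x * g (x⁻¹ * y)) = f x * ∑' z, g z := by
    intro x
    have e : ∑' (y : G), g (x⁻¹ * y) = ∑' z, g z := by
      have := (Equiv.mulLeft x⁻¹).tsum_eq g
      simpa using this
    rw [tsum_mul_left, e]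
  calc ∑' y, conv f g y = ∑' x : G, ∑' y : G, f x * g (x⁻¹ * y) := h2.symm.trans h1
    _ = ∑' x : G, f x * ∑' z, g z := tsum_congr h5
    _ = (∑' x, f x) * (∑' x, g x) := tsum_mul_right

lemma conv_assoc' {f g h : G → ℝ} (hf0 : ∀ x, 0 ≤ f x) (hg0 : ∀ x, 0 ≤ g x)
    (hh0 : ∀ x, 0 ≤ h x) (hf : Summable f) (hg : Summable g) (hh : Summable h) :
    conv (conv f g) h = conv f (conv g h) := by
  funext y
  simp only [conv]
  have hC : ∀ w, h w ≤ ∑' x, h x := fun w => Summable.le_tsum hh w fun _ _ => hh0 _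
  have hT : Summable (fun p : G × G => f p.1 * g (p.1⁻¹ * p.2) * h (p.2⁻¹ * y)) := by
    refine Summable.of_nonneg_of_le (fun p => by
      have := hf0 p.1; have := hg0 (p.1⁻¹ * p.2); have := hh0 (p.2⁻¹ * y); positivity)
      (fun p => ?_) ((summable_shear hf0 hg0 hf hg).mul_right (∑' x, h x))
    exact mul_le_mul_of_nonneg_left (hC _) (mul_nonneg (hf0 _) (hg0 _))
  have step1 : ∑' (z : G), (∑' (u : G), f u * g (u⁻¹ * z)) * h (z⁻¹ * y)
      = ∑' z, ∑' u, f u * g (u⁻¹ * z) * h (z⁻¹ * y) := by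
    refine tsum_congr fun z => ?_
    rw [tsum_mul_right]
  have step2 : ∑' z, ∑' u, f u * g (u⁻¹ * z) * h (z⁻¹ * y)
      = ∑' u, ∑' z, f u * g (u⁻¹ * z) * h (z⁻¹ * y) := by
    exact Summable.tsum_comm hT
  have step3 : ∀ u, (∑' z, f u * g (u⁻¹ * z) * h (z⁻¹ * y))
      = f u * ∑' w, g w * h (w⁻¹ * (u⁻¹ * y)) := by
    intro u
    have e := (Equiv.mulLeft u).tsum_eq (fun z => f u * g (u⁻¹ * z) * h (z⁻¹ * y))
    simp only [Equiv.coe_mulLeft] at e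
    rw [← e]
    have : ∀ w : G, f u * g (u⁻¹ * (u * w)) * h ((u * w)⁻¹ * y)
        = f u * (g w * h (w⁻¹ * (u⁻¹ * y))) := by
      intro w
      rw [inv_mul_cancel_left, mul_inv_rev, mul_assoc, mul_assoc]
    rw [tsum_congr this, tsum_mul_left]
  rw [step1, step2, tsum_congr step3]

end Basics

section Pow

variable {G : Type*} [Group G] {μ : G → ℝ}

lemma convPow_nonneg (hμ0 : ∀ x, 0 ≤ μ x) : ∀ n x, 0 ≤ convPow μ n x := by
  intro n
  induction n with
  | zero =>
      intro x; dsimp [convPow]; split <;> norm_num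
  | succ n ih =>
      intro x
      exact tsum_nonneg fun i => mul_nonneg (ih _) (hμ0 _)

lemma convPow_summable (hμ0 : ∀ x, 0 ≤ μ x) (hμs : Summable μ) :
    ∀ n, Summable (convPow μ n) := by
  intro n
  induction n with
  | zero =>
      refine summable_of_ne_finset_zero (s := {(1 : G)}) fun x hx => ?_
      simp only [Finset.mem_singleton] at hx
      simp [convPow, hx]
  | succ n ih =>
      exact conv_summable (convPow_nonneg hμ0 n) hμ0 ih hμs

lemma convPow_tsum (hμ0 : ∀ x, 0 ≤ μ x) (hμs : Summable μ) (hμ1 : ∑' x, μ x = 1) :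
    ∀ n, ∑' x, convPow μ n x = 1 := by
  intro n
  induction n with
  | zero =>
      simpa [convPow] using tsum_ite_eq (1 : G) (1 : ℝ)
  | succ n ih =>
      have := tsum_conv (convPow_nonneg hμ0 n) hμ0 (convPow_summable hμ0 hμs n) hμs
      calc ∑' x, convPow μ (n+1) x = (∑' x, convPow μ n x) * (∑' x, μ x) := this
        _ = 1 := by rw [ih, hμ1, one_mul]

lemma conv_dirac (f : G → ℝ) : conv f (convPow μ 0) = f := by
  funext y
  have h : ∀ x : G, x ≠ y → f x * convPow μ 0 (x⁻¹ * y) = 0 := by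
    intro x hx
    have : ¬ (x⁻¹ * y = 1) := by
      rw [inv_mul_eq_one]; exact hx
    simp [convPow, this]
  calc conv f (convPow μ 0) y = f y * convPow μ 0 (y⁻¹ * y) := tsum_eq_single y h
    _ = f y := by simp [convPow]

lemma dirac_conv (f : G → ℝ) : conv (convPow μ 0) f = f := by
  funext y
  have h : ∀ x : G, x ≠ 1 → convPow μ 0 x * f (x⁻¹ * y) = 0 := by
    intro x hx
    simp [convPow, hx]
  calc conv (convPow μ 0) f y = convPow μ 0 1 * f (1⁻¹ * y) := tsum_eq_single 1 h
    _ = f y := by simp [convPow]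

lemma convPow_add (hμ0 : ∀ x, 0 ≤ μ x) (hμs : Summable μ) (m : ℕ) :
    ∀ n, convPow μ (m + n) = conv (convPow μ m) (convPow μ n) := by
  intro n
  induction n with
  | zero => exact (conv_dirac (convPow μ m)).symm
  | succ n ih =>
      show conv (convPow μ (m + n)) μ = conv (convPow μ m) (conv (convPow μ n) μ)
      rw [ih]
      exact conv_assoc' (convPow_nonneg hμ0 m) (convPow_nonneg hμ0 n) hμ0
        (convPow_summable hμ0 hμs m) (convPow_summable hμ0 hμs n) hμs

lemma convPow_one_eq : convPow μ 1 = μ := dirac_conv μ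

lemma convPow_succ' (hμ0 : ∀ x, 0 ≤ μ x) (hμs : Summable μ) (n : ℕ) :
    convPow μ (n + 1) = conv μ (convPow μ n) := by
  have h := convPow_add hμ0 hμs 1 n
  rw [convPow_one_eq] at h
  rw [← h, Nat.add_comm]

lemma convPow_symm (hμ0 : ∀ x, 0 ≤ μ x) (hμs : Summable μ) (hsymm : ∀ x : G, μ x⁻¹ = μ x) :
    ∀ n (y : G), convPow μ n y⁻¹ = convPow μ n y := by
  intro n
  induction n with
  | zero =>
      intro y; simp [convPow, inv_eq_one]
  | succ n ih =>
      intro y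
      have e : G ≃ G := (Equiv.inv G).trans (Equiv.mulLeft y⁻¹)
      have lhs : convPow μ (n+1) y⁻¹ = ∑' x : G, μ x * convPow μ n (x * y) := by
        have e2 := ((Equiv.inv G).trans (Equiv.mulLeft y⁻¹)).tsum_eq
          (fun t => convPow μ n t * μ (t⁻¹ * y⁻¹))
        calc convPow μ (n+1) y⁻¹ = ∑' t : G, convPow μ n t * μ (t⁻¹ * y⁻¹) := rfl
          _ = ∑' x : G, convPow μ n (y⁻¹ * x⁻¹) * μ ((y⁻¹ * x⁻¹)⁻¹ * y⁻¹) := by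
              rw [← e2]; rfl
          _ = ∑' x : G, μ x * convPow μ n (x * y) := by
              refine tsum_congr fun x => ?_
              have h1 : (y⁻¹ * x⁻¹)⁻¹ * y⁻¹ = x := by group
              have h2 : convPow μ n (y⁻¹ * x⁻¹) = convPow μ n (x * y) := by
                rw [show y⁻¹ * x⁻¹ = (x * y)⁻¹ by group, ih]
              rw [h1, h2, mul_comm]
      have rhs : convPow μ (n+1) y = ∑' x : G, μ x * convPow μ n (x * y) := by
        rw [convPow_succ' hμ0 hμs]
        have e3 := (Equiv.inv G).tsum_eq (fun x => μ x * convPow μ n (x⁻¹ * y))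
        calc conv μ (convPow μ n) y = ∑' x : G, μ x * convPow μ n (x⁻¹ * y) := rfl
          _ = ∑' x : G, μ x⁻¹ * convPow μ n (x⁻¹⁻¹ * y) := by rw [← e3]; rfl
          _ = ∑' x : G, μ x * convPow μ n (x * y) := by
              refine tsum_congr fun x => ?_
              rw [hsymm, inv_inv]
      rw [lhs, rhs]

end Pow

section CS

variable {G : Type*}

lemma summable_mul_of_sq {f g : G → ℝ} (hf : Summable fun x => f x ^ 2)
    (hg : Summable fun x => g x ^ 2) : Summable fun x => f x * g x := by
  have h : Summable fun x => |f x * g x| := by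
    refine Summable.of_nonneg_of_le (fun x => abs_nonneg _) (fun x => ?_)
      (((hf.add hg)).mul_left (1/2))
    have h1 : |f x * g x| = |f x| * |g x| := abs_mul _ _
    nlinarith [sq_nonneg (|f x| - |g x|), sq_abs (f x), sq_abs (g x)]
  exact h.of_abs

lemma abs_tsum_mul_le {f g : G → ℝ} (hf : Summable fun x => f x ^ 2)
    (hg : Summable fun x => g x ^ 2) :
    |∑' x, f x * g x| ≤ Real.sqrt (∑' x, f x ^ 2) * Real.sqrt (∑' x, g x ^ 2) := by
  have hs := summable_mul_of_sq hf hg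
  have habs : Summable fun x => |f x * g x| := hs.abs
  have h1 : |∑' x, f x * g x| ≤ ∑' x, |f x * g x| := by
    have := norm_tsum_le_tsum_norm (habs.congr fun x => (Real.norm_eq_abs (f x * g x)).symm)
    simpa only [Real.norm_eq_abs] using this
  refine h1.trans ?_
  refine Summable.tsum_le_of_sum_le habs fun s => ?_
  calc ∑ x ∈ s, |f x * g x| = ∑ x ∈ s, |f x| * |g x| := by
        refine Finset.sum_congr rfl fun x _ => abs_mul _ _
    _ ≤ Real.sqrt (∑ x ∈ s, |f x| ^ 2) * Real.sqrt (∑ x ∈ s, |g x| ^ 2) :=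
        Real.sum_mul_le_sqrt_mul_sqrt s _ _
    _ = Real.sqrt (∑ x ∈ s, f x ^ 2) * Real.sqrt (∑ x ∈ s, g x ^ 2) := by
        simp [sq_abs]
    _ ≤ Real.sqrt (∑' x, f x ^ 2) * Real.sqrt (∑' x, g x ^ 2) := by
        refine mul_le_mul (Real.sqrt_le_sqrt (Summable.sum_le_tsum s (fun i _ => sq_nonneg _) hf))
          (Real.sqrt_le_sqrt (Summable.sum_le_tsum s (fun i _ => sq_nonneg _) hg))
          (Real.sqrt_nonneg _) (Real.sqrt_nonneg _)

end CS

section Double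

variable {G : Type*} [Group G] {μ : G → ℝ}

lemma convPow_sq_summable (hμ0 : ∀ x, 0 ≤ μ x) (hμs : Summable μ) (hμ1 : ∑' x, μ x = 1)
    (m : ℕ) : Summable fun x => convPow μ m x ^ 2 := by
  refine Summable.of_nonneg_of_le (fun x => sq_nonneg _) (fun x => ?_)
    (convPow_summable hμ0 hμs m)
  have h1 : convPow μ m x ≤ 1 := by
    have := Summable.le_tsum (convPow_summable hμ0 hμs m) x fun _ _ => convPow_nonneg hμ0 m _
    rw [convPow_tsum hμ0 hμs hμ1 m] at this
    exact this
  nlinarith [convPow_nonneg hμ0 m x]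

lemma convPow_double_one (hμ0 : ∀ x, 0 ≤ μ x) (hμs : Summable μ)
    (hsymm : ∀ x : G, μ x⁻¹ = μ x) (m : ℕ) :
    convPow μ (m + m) 1 = ∑' x, convPow μ m x ^ 2 := by
  rw [convPow_add hμ0 hμs m m]
  calc conv (convPow μ m) (convPow μ m) 1
      = ∑' x, convPow μ m x * convPow μ m (x⁻¹ * 1) := rfl
    _ = ∑' x, convPow μ m x ^ 2 := by
        refine tsum_congr fun x => ?_
        rw [mul_one, convPow_symm hμ0 hμs hsymm m, sq]

end Double

section Pos

variable {G : Type*} [Group G] {μ : G → ℝ}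

lemma convPow_double_pos (hμ0 : ∀ x, 0 ≤ μ x) (hμs : Summable μ) (hμ1 : ∑' x, μ x = 1)
    (hsymm : ∀ x : G, μ x⁻¹ = μ x) (m : ℕ) : 0 < convPow μ (m + m) 1 := by
  rw [convPow_double_one hμ0 hμs hsymm m]
  obtain ⟨x, hx⟩ : ∃ x, 0 < convPow μ m x := by
    by_contra hcon
    push_neg at hcon
    have hz : ∀ x, convPow μ m x = 0 := fun x => le_antisymm (hcon x) (convPow_nonneg hμ0 m x)
    have := convPow_tsum hμ0 hμs hμ1 m
    simp only [hz, tsum_zero] at this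
    norm_num at this
  calc (0:ℝ) < convPow μ m x ^ 2 := by positivity
    _ ≤ ∑' x, convPow μ m x ^ 2 :=
        Summable.le_tsum (convPow_sq_summable hμ0 hμs hμ1 m) x fun _ _ => sq_nonneg _

lemma convPow_one_mul_le (hμ0 : ∀ x, 0 ≤ μ x) (hμs : Summable μ) (m n : ℕ) :
    convPow μ m 1 * convPow μ n 1 ≤ convPow μ (m + n) 1 := by
  rw [convPow_add hμ0 hμs m n]
  have hsl := summable_conv_slice (convPow_nonneg hμ0 m) (convPow_nonneg hμ0 n)
    (convPow_summable hμ0 hμs m) (convPow_summable hμ0 hμs n) 1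
  have h := Summable.le_tsum hsl 1 fun x _ => mul_nonneg (convPow_nonneg hμ0 m x) (convPow_nonneg hμ0 n _)
  simp only [inv_one, one_mul, mul_one, inv_mul_cancel] at h
  calc convPow μ m 1 * convPow μ n 1 ≤ ∑' x, convPow μ m x * convPow μ n (x⁻¹ * 1) := by
        simpa using h
    _ = conv (convPow μ m) (convPow μ n) 1 := rfl

lemma convPow_double_at (hμ0 : ∀ x, 0 ≤ μ x) (hμs : Summable μ)
    (hsymm : ∀ x : G, μ x⁻¹ = μ x) (m : ℕ) (w : G) :
    convPow μ (m + m) w = ∑' x, convPow μ m x * convPow μ m (w⁻¹ * x) := by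
  rw [convPow_add hμ0 hμs m m]
  refine tsum_congr fun x => ?_
  congr 1
  rw [show w⁻¹ * x = (x⁻¹ * w)⁻¹ by group, convPow_symm hμ0 hμs hsymm m]

end Pos

section Key

variable {G : Type*} [Group G] {μ : G → ℝ}

lemma key_translation_bound (hμ0 : ∀ x, 0 ≤ μ x) (hμs : Summable μ) (hμ1 : ∑' x, μ x = 1)
    (hsymm : ∀ x : G, μ x⁻¹ = μ x) (g u : G) (m : ℕ) :
    |convPow μ (m+m) (u * g) - convPow μ (m+m) u| ≤
      convPow μ (m+m) 1 * Real.sqrt (2 - 2 * (convPow μ (m+m) g / convPow μ (m+m) 1)) := by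
  set d : G → ℝ := fun t => convPow μ m (g⁻¹ * t) - convPow μ m t with hd
  have hsq : Summable fun x => convPow μ m x ^ 2 := convPow_sq_summable hμ0 hμs hμ1 m
  have hsqg : Summable fun t => convPow μ m (g⁻¹ * t) ^ 2 := by
    have := (Equiv.mulLeft g⁻¹).summable_iff.mpr hsq
    exact this.congr fun t => by simp
  have hd2 : Summable fun t => d t ^ 2 := by
    refine Summable.of_nonneg_of_le (fun t => sq_nonneg _) (fun t => ?_)
      (((hsqg.mul_left 2)).add (hsq.mul_left 2))
    simp only [hd]
    nlinarith [sq_nonneg (convPow μ m (g⁻¹ * t) + convPow μ m t)]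
  have hcross : Summable fun t => convPow μ m (g⁻¹ * t) * convPow μ m t :=
    summable_mul_of_sq hsqg hsq
  have hgsum : ∑' t, convPow μ m (g⁻¹ * t) ^ 2 = ∑' t, convPow μ m t ^ 2 := by
    have := (Equiv.mulLeft g⁻¹).tsum_eq (fun x => convPow μ m x ^ 2)
    simpa using this
  have hcrossval : ∑' t, convPow μ m (g⁻¹ * t) * convPow μ m t = convPow μ (m+m) g := by
    rw [convPow_double_at hμ0 hμs hsymm m g]
    exact tsum_congr fun t => mul_comm _ _
  have he2 : convPow μ (m+m) 1 = ∑' x, convPow μ m x ^ 2 :=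
    convPow_double_one hμ0 hμs hsymm m
  have he2pos : 0 < convPow μ (m+m) 1 := convPow_double_pos hμ0 hμs hμ1 hsymm m
  have hDsq : ∑' t, d t ^ 2 = 2 * convPow μ (m+m) 1 - 2 * convPow μ (m+m) g := by
    have expand : ∀ t, d t ^ 2 = (convPow μ m (g⁻¹*t) ^2 + convPow μ m t ^2)
        - 2 * (convPow μ m (g⁻¹*t) * convPow μ m t) := fun t => by simp only [hd]; ring
    rw [tsum_congr expand, Summable.tsum_sub (hsqg.add hsq) (hcross.mul_left 2), Summable.tsum_add hsqg hsq,
      tsum_mul_left, hgsum, hcrossval, ← he2]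
    ring
  have hslice : ∀ w : G, Summable fun x => convPow μ m x * convPow μ m (w⁻¹ * x) := by
    intro w
    refine summable_mul_of_sq hsq ?_
    have := (Equiv.mulLeft w⁻¹).summable_iff.mpr hsq
    exact this.congr fun t => by simp
  have hdiff : convPow μ (m+m) (u*g) - convPow μ (m+m) u
      = ∑' x, convPow μ m x * d (u⁻¹ * x) := by
    rw [convPow_double_at hμ0 hμs hsymm m (u*g), convPow_double_at hμ0 hμs hsymm m u,
      ← Summable.tsum_sub (hslice (u*g)) (hslice u)]
    refine tsum_congr fun x => ?_
    simp only [hd]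
    rw [show g⁻¹ * (u⁻¹ * x) = (u*g)⁻¹ * x by group]
    ring
  have hdu2 : Summable fun x => d (u⁻¹ * x) ^ 2 := by
    have := (Equiv.mulLeft u⁻¹).summable_iff.mpr hd2
    exact this.congr fun t => by simp
  have hCS := abs_tsum_mul_le hsq hdu2
  have hre : ∑' x, d (u⁻¹ * x) ^ 2 = ∑' t, d t ^ 2 := by
    have := (Equiv.mulLeft u⁻¹).tsum_eq (fun t => d t ^ 2)
    simpa using this
  rw [hdiff]
  refine hCS.trans ?_
  rw [hre, hDsq, ← he2]
  have hq : 2 * convPow μ (m+m) 1 - 2 * convPow μ (m+m) g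
      = convPow μ (m+m) 1 * (2 - 2 * (convPow μ (m+m) g / convPow μ (m+m) 1)) := by
    have hne := he2pos.ne'
    field_simp
  rw [hq, Real.sqrt_mul he2pos.le, ← mul_assoc, Real.mul_self_sqrt he2pos.le]

end Key

section Crit

variable {G : Type*} [Group G] {μ : G → ℝ}

lemma mem_Amu_of_bound (hμ0 : ∀ x, 0 ≤ μ x) (hμs : Summable μ) (hμ1 : ∑' x, μ x = 1)
    (hsymm : ∀ x : G, μ x⁻¹ = μ x) (haper : IsAperiodic μ)
    (w : G) (c : ℕ → ℝ) (hc : Tendsto c atTop (𝓝 0))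
    (hb : ∀ m (u : G), |convPow μ (m+m) (u*w) - convPow μ (m+m) u|
      ≤ convPow μ (m+m) 1 * c m) :
    w ∈ Amu μ := by
  have hc0 : ∀ m, 0 ≤ c m := by
    intro m
    have h := hb m 1
    have he2pos := convPow_double_pos hμ0 hμs hμ1 hsymm m
    nlinarith [abs_nonneg (convPow μ (m+m) (1*w) - convPow μ (m+m) 1)]
  obtain ⟨k, hk1, hkodd, hkpos⟩ : ∃ k, 1 ≤ k ∧ Odd k ∧ 0 < convPow μ k 1 := by
    by_contra hcon
    have h2 : (2:ℕ) = 1 := by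
      refine haper 2 fun n hn hposn => ?_
      rcases Nat.even_or_odd n with he | ho
      · exact he.two_dvd
      · exact (hcon ⟨n, hn, ho, hposn⟩).elim
    norm_num at h2
  have hpos : ∀ n, k ≤ n → 0 < convPow μ n 1 := by
    intro n hkn
    rcases Nat.even_or_odd n with he | ho
    · obtain ⟨m, rfl⟩ := he
      exact convPow_double_pos hμ0 hμs hμ1 hsymm m
    · have he' : Even (n - k) := Nat.Odd.sub_odd ho hkodd
      obtain ⟨m, hm⟩ := he'
      have hn : n = k + (m + m) := by omega
      rw [hn]
      calc (0:ℝ) < convPow μ k 1 * convPow μ (m+m) 1 :=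
            mul_pos hkpos (convPow_double_pos hμ0 hμs hμ1 hsymm m)
        _ ≤ convPow μ (k + (m+m)) 1 := convPow_one_mul_le hμ0 hμs k (m+m)
  have heven_bd : ∀ m, |convPow μ (m+m) w / convPow μ (m+m) 1 - 1| ≤ c m := by
    intro m
    have hp := convPow_double_pos hμ0 hμs hμ1 hsymm m
    have h := hb m 1
    rw [one_mul] at h
    have heq : convPow μ (m+m) w / convPow μ (m+m) 1 - 1
        = (convPow μ (m+m) w - convPow μ (m+m) 1) / convPow μ (m+m) 1 := by
      field_simp
    rw [heq, abs_div, abs_of_pos hp, div_le_iff₀ hp]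
    linarith [h]
  have hodd_bd : ∀ m, |convPow μ (k + (m+m)) w / convPow μ (k + (m+m)) 1 - 1|
      ≤ c m / convPow μ k 1 := by
    intro m
    have hp : 0 < convPow μ (k + (m+m)) 1 := hpos _ (by omega)
    have he2pos := convPow_double_pos hμ0 hμs hμ1 hsymm m
    have hks := convPow_summable hμ0 hμs k
    have hk0 := convPow_nonneg hμ0 k
    have h2m0 := convPow_nonneg hμ0 (m+m)
    have hsl : ∀ y : G, Summable fun x => convPow μ k x * convPow μ (m+m) (x⁻¹ * y) :=
      fun y => summable_conv_slice hk0 h2m0 hks (convPow_summable hμ0 hμs (m+m)) y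
    have hkey : |convPow μ (k + (m+m)) w - convPow μ (k + (m+m)) 1|
        ≤ convPow μ (m+m) 1 * c m := by
      have hdiff : convPow μ (k + (m+m)) w - convPow μ (k + (m+m)) 1
          = ∑' x, (convPow μ k x * convPow μ (m+m) (x⁻¹ * w)
              - convPow μ k x * convPow μ (m+m) (x⁻¹ * 1)) := by
        rw [convPow_add hμ0 hμs k (m+m)]
        exact (Summable.tsum_sub (hsl w) (hsl 1)).symm
      have hsd : Summable fun x => convPow μ k x * convPow μ (m+m) (x⁻¹*w)
          - convPow μ k x * convPow μ (m+m) (x⁻¹*1) := (hsl w).sub (hsl 1)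
      have habs : Summable fun x => |convPow μ k x * convPow μ (m+m) (x⁻¹*w)
          - convPow μ k x * convPow μ (m+m) (x⁻¹*1)| := hsd.abs
      have hbd : ∀ x : G, |convPow μ k x * convPow μ (m+m) (x⁻¹*w)
          - convPow μ k x * convPow μ (m+m) (x⁻¹*1)|
          ≤ convPow μ k x * (convPow μ (m+m) 1 * c m) := by
        intro x
        have h := hb m x⁻¹
        have heqx : convPow μ k x * convPow μ (m+m) (x⁻¹*w)
            - convPow μ k x * convPow μ (m+m) (x⁻¹*1)
            = convPow μ k x * (convPow μ (m+m) (x⁻¹*w) - convPow μ (m+m) (x⁻¹*1)) := by ring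
        rw [heqx, abs_mul, abs_of_nonneg (hk0 x)]
        refine mul_le_mul_of_nonneg_left ?_ (hk0 x)
        simpa [mul_one] using h
      have h1 : |∑' x, (convPow μ k x * convPow μ (m+m) (x⁻¹ * w)
            - convPow μ k x * convPow μ (m+m) (x⁻¹ * 1))|
          ≤ ∑' x, |convPow μ k x * convPow μ (m+m) (x⁻¹ * w)
            - convPow μ k x * convPow μ (m+m) (x⁻¹ * 1)| := by
        have := norm_tsum_le_tsum_norm (habs.congr fun x => (Real.norm_eq_abs _).symm)
        simpa only [Real.norm_eq_abs] using this
      rw [hdiff]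
      refine h1.trans ?_
      calc ∑' x, |convPow μ k x * convPow μ (m+m) (x⁻¹ * w)
            - convPow μ k x * convPow μ (m+m) (x⁻¹ * 1)|
          ≤ ∑' x, convPow μ k x * (convPow μ (m+m) 1 * c m) :=
            Summable.tsum_le_tsum hbd habs (hks.mul_right _)
        _ = convPow μ (m+m) 1 * c m := by
            rw [tsum_mul_right, convPow_tsum hμ0 hμs hμ1 k, one_mul]
    have hmul : convPow μ k 1 * convPow μ (m+m) 1 ≤ convPow μ (k + (m+m)) 1 :=
      convPow_one_mul_le hμ0 hμs k (m+m)
    have heq : convPow μ (k + (m+m)) w / convPow μ (k + (m+m)) 1 - 1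
        = (convPow μ (k + (m+m)) w - convPow μ (k + (m+m)) 1) / convPow μ (k + (m+m)) 1 := by
      field_simp
    rw [heq, abs_div, abs_of_pos hp, div_le_div_iff₀ hp hkpos]
    nlinarith [mul_le_mul_of_nonneg_right hkey hkpos.le,
      mul_le_mul_of_nonneg_left hmul (hc0 m)]
  show Tendsto (fun n => convPow μ n w / convPow μ n 1) atTop (𝓝 1)
  rw [Metric.tendsto_atTop]
  intro ε hε
  have hδ : 0 < min ε (ε * convPow μ k 1) := lt_min hε (mul_pos hε hkpos)
  obtain ⟨M, hM⟩ := (Metric.tendsto_atTop.mp hc) _ hδ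
  refine ⟨2*M + k + 1, fun n hn => ?_⟩
  rw [Real.dist_eq]
  rcases Nat.even_or_odd n with he | ho
  · obtain ⟨m, rfl⟩ := he
    have hm : M ≤ m := by omega
    have hcm := hM m hm
    rw [Real.dist_eq, sub_zero] at hcm
    calc |convPow μ (m+m) w / convPow μ (m+m) 1 - 1| ≤ c m := heven_bd m
      _ ≤ |c m| := le_abs_self _
      _ < min ε (ε * convPow μ k 1) := hcm
      _ ≤ ε := min_le_left _ _
  · have he' : Even (n - k) := Nat.Odd.sub_odd ho hkodd
    obtain ⟨m, hm⟩ := he'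
    have hn' : n = k + (m+m) := by omega
    have hmM : M ≤ m := by omega
    have hcm := hM m hmM
    rw [Real.dist_eq, sub_zero] at hcm
    subst hn'
    calc |convPow μ (k+(m+m)) w / convPow μ (k+(m+m)) 1 - 1|
        ≤ c m / convPow μ k 1 := hodd_bd m
      _ ≤ |c m| / convPow μ k 1 := by gcongr; exact le_abs_self _
      _ < ε := by
          rw [div_lt_iff₀ hkpos]
          exact lt_of_lt_of_le hcm (min_le_right _ _)

end Crit

section Final

variable {G : Type*} [Group G] {μ : G → ℝ}

lemma Amu_one (hμ0 : ∀ x, 0 ≤ μ x) (hμs : Summable μ) (hμ1 : ∑' x, μ x = 1)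
    (hsymm : ∀ x : G, μ x⁻¹ = μ x) (haper : IsAperiodic μ) : (1:G) ∈ Amu μ := by
  refine mem_Amu_of_bound hμ0 hμs hμ1 hsymm haper 1 (fun _ => 0) tendsto_const_nhds ?_
  intro m u
  simp [mul_one]

lemma Amu_inv (hμ0 : ∀ x, 0 ≤ μ x) (hμs : Summable μ) (hsymm : ∀ x : G, μ x⁻¹ = μ x)
    {g : G} (hg : g ∈ Amu μ) : g⁻¹ ∈ Amu μ := by
  have heq : (fun n => convPow μ n g⁻¹ / convPow μ n 1)
      = fun n => convPow μ n g / convPow μ n 1 :=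
    funext fun n => by rw [convPow_symm hμ0 hμs hsymm n g]
  show Tendsto (fun n => convPow μ n g⁻¹ / convPow μ n 1) atTop (𝓝 1)
  rw [heq]
  exact hg

lemma Amu_mul (hμ0 : ∀ x, 0 ≤ μ x) (hμs : Summable μ) (hμ1 : ∑' x, μ x = 1)
    (hsymm : ∀ x : G, μ x⁻¹ = μ x) (haper : IsAperiodic μ)
    {g h : G} (hg : g ∈ Amu μ) (hh : h ∈ Amu μ) : g * h ∈ Amu μ := by
  have hdouble : Tendsto (fun m : ℕ => m + m) atTop atTop :=
    tendsto_atTop_mono (fun m => by simpa using Nat.le_add_right m m) tendsto_id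
  have hq : ∀ a : G, a ∈ Amu μ → Tendsto
      (fun m => Real.sqrt (2 - 2 * (convPow μ (m+m) a / convPow μ (m+m) 1)))
      atTop (𝓝 0) := by
    intro a ha
    have h1 : Tendsto (fun m => convPow μ (m+m) a / convPow μ (m+m) 1) atTop (𝓝 1) :=
      ha.comp hdouble
    have h2 : Tendsto (fun m => 2 - 2 * (convPow μ (m+m) a / convPow μ (m+m) 1))
        atTop (𝓝 0) := by
      have := (tendsto_const_nhds (x := (2:ℝ)) (f := atTop (α := ℕ))).sub (h1.const_mul 2)
      simpa using this
    have h3 := (Real.continuous_sqrt.tendsto 0).comp h2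
    simpa [Function.comp_def] using h3
  refine mem_Amu_of_bound hμ0 hμs hμ1 hsymm haper (g*h)
    (fun m => Real.sqrt (2 - 2*(convPow μ (m+m) g / convPow μ (m+m) 1))
      + Real.sqrt (2 - 2*(convPow μ (m+m) h / convPow μ (m+m) 1))) ?_ ?_
  · simpa using (hq g hg).add (hq h hh)
  · intro m u
    have h1 := key_translation_bound hμ0 hμs hμ1 hsymm h (u*g) m
    have h2 := key_translation_bound hμ0 hμs hμ1 hsymm g u m
    calc |convPow μ (m+m) (u*(g*h)) - convPow μ (m+m) u|
        = |(convPow μ (m+m) ((u*g)*h) - convPow μ (m+m) (u*g))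
            + (convPow μ (m+m) (u*g) - convPow μ (m+m) u)| := by
          rw [← mul_assoc]; congr 1; ring
      _ ≤ |convPow μ (m+m) ((u*g)*h) - convPow μ (m+m) (u*g)|
            + |convPow μ (m+m) (u*g) - convPow μ (m+m) u| := abs_add_le _ _
      _ ≤ convPow μ (m+m) 1 * Real.sqrt (2 - 2*(convPow μ (m+m) h / convPow μ (m+m) 1))
            + convPow μ (m+m) 1 * Real.sqrt (2 - 2*(convPow μ (m+m) g / convPow μ (m+m) 1)) :=
          add_le_add h1 h2
      _ = _ := by ring

end Final

theorem stmt3 {G : Type*} [Group G] [Group.FG G] (μ : G → ℝ)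
    (hprob : IsProb μ) (hsymm : MeasSymm μ) (haper : IsAperiodic μ)
    (hgen : GeneratingSupport μ) :
    ∃ H : Subgroup G, (H : Set G) = Amu μ := by
  obtain ⟨hμ0, hμ1⟩ := hprob
  have hμs : Summable μ := by
    by_contra hs
    rw [tsum_eq_zero_of_not_summable hs] at hμ1
    norm_num at hμ1
  have hsymm' : ∀ x : G, μ x⁻¹ = μ x := hsymm
  exact ⟨{ carrier := Amu μ
           one_mem' := Amu_one hμ0 hμs hμ1 hsymm' haper
           mul_mem' := fun ha hb => Amu_mul hμ0 hμs hμ1 hsymm' haper ha hb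
           inv_mem' := fun ha => Amu_inv hμ0 hμs hsymm' ha }, rfl⟩
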